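/- arXiv:0709.2337 — 2 statements merged into one kernel-verified Lean document; each statement's English description precedes it below -/
import Mathlib

section
/- Let Ω ⊆ ℝ² be open, ν : Ω → ℝ, and let f : Ω → ℝ be a positive twice continuously differentiable function satisfying f_xx − f_tt = νf on Ω. Then for every twice continuously differentiable real-valued function φ on Ω the following two operator identities hold pointwise (as equalities in 𝔻, with real numbers embedded in 𝔻): (¼)(φ_xx − φ_tt − νφ) = ∂_z̄(∂_zφ − (f_z/f)φ) + (f_z/f)·conj(∂_zφ − (f_z/f)φ), and (¼)(φ_xx − φ_tt − νφ) = ∂_z(∂_z̄φ − (f_z̄/f)φ) + (f_z̄/f)·conj(∂_z̄φ − (f_z̄/f)φ); i.e. (□ − ν)φ = 4(∂_z̄ + (f_z/f)C)(∂_z − (f_z/f)C)φ = 4(∂_z + (f_z̄/f)C)(∂_z̄ − (f_z̄/f)C)φ, where C denotes hyperbolic conjugation. -/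
noncomputable section

open Filter Topology MeasureTheory

/-- Hyperbolic (duplex) numbers 𝔻, modeled as pairs `(Re z, Im z)` with `j ^ 2 = 1`. -/
abbrev Hyp : Type := ℝ × ℝ

/-- Real part of a hyperbolic number. -/
def hre (a : Hyp) : ℝ := a.1

/-- Imaginary part of a hyperbolic number. -/
def him (a : Hyp) : ℝ := a.2

/-- The hyperbolic imaginary unit `j`. -/
def hj : Hyp := (0, 1)

/-- Hyperbolic multiplication: `(x+tj)(x'+t'j) = (xx'+tt') + (xt'+tx')j`. -/
def hmul (a b : Hyp) : Hyp := (a.1 * b.1 + a.2 * b.2, a.1 * b.2 + a.2 * b.1)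

/-- Hyperbolic conjugation: `conj (x+tj) = x - tj`. -/
def hconj (a : Hyp) : Hyp := (a.1, -a.2)

/-- Invertibility of a hyperbolic number: `x² ≠ t²`. -/
def IsInv (a : Hyp) : Prop := a.1 ^ 2 ≠ a.2 ^ 2

/-- Hyperbolic inverse `z⁻¹ = z̄ / |z|²` with `|z|² = x² - t²`. -/
def hinv (a : Hyp) : Hyp := (a.1 / (a.1 ^ 2 - a.2 ^ 2), -a.2 / (a.1 ^ 2 - a.2 ^ 2))

/-- Hyperbolic division. -/
def hdiv (a b : Hyp) : Hyp := hmul a (hinv b)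

/-- Partial derivative in the first (`x`) variable. -/
def pdx (g : Hyp → ℝ) (p : Hyp) : ℝ := deriv (fun s => g (s, p.2)) p.1

/-- Partial derivative in the second (`t`) variable. -/
def pdt (g : Hyp → ℝ) (p : Hyp) : ℝ := deriv (fun s => g (p.1, s)) p.2

/-- The wave operator `□g = g_xx - g_tt`. -/
def waveOp (g : Hyp → ℝ) (p : Hyp) : ℝ := pdx (pdx g) p - pdt (pdt g) p

/-- `w_z = ½(∂_x + j ∂_t) w = ½((u_x+v_t) + (v_x+u_t)j)` for a 𝔻-valued `w = u + jv`. -/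
def dz (w : Hyp → Hyp) (p : Hyp) : Hyp :=
  ((pdx (fun q => (w q).1) p + pdt (fun q => (w q).2) p) / 2,
   (pdx (fun q => (w q).2) p + pdt (fun q => (w q).1) p) / 2)

/-- `w_z̄ = ½(∂_x - j ∂_t) w = ½((u_x-v_t) + (v_x-u_t)j)` for a 𝔻-valued `w = u + jv`. -/
def dzbar (w : Hyp → Hyp) (p : Hyp) : Hyp :=
  ((pdx (fun q => (w q).1) p - pdt (fun q => (w q).2) p) / 2,
   (pdx (fun q => (w q).2) p - pdt (fun q => (w q).1) p) / 2)

/-- `f_z = ½(f_x + j f_t)` for a real-valued `f`. -/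
def rz (f : Hyp → ℝ) (p : Hyp) : Hyp := (pdx f p / 2, pdt f p / 2)

/-- `f_z̄ = ½(f_x - j f_t)` for a real-valued `f`. -/
def rzbar (f : Hyp → ℝ) (p : Hyp) : Hyp := (pdx f p / 2, -(pdt f p) / 2)

/-- 𝔻-differentiability at `z₀`: the difference quotient `(f z - f z₀)·(z - z₀)⁻¹`
tends to `d` as `z → z₀` through points with `z - z₀` invertible. -/
def HasHDerivAt (f : Hyp → Hyp) (d : Hyp) (z₀ : Hyp) : Prop :=
  Filter.Tendsto (fun z => hmul (f z - f z₀) (hinv (z - z₀)))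
    (nhdsWithin z₀ {z | IsInv (z - z₀)}) (nhds d)

/-- `F Ḡ - F̄ G`. -/
def pairDenom (F G : Hyp → Hyp) (z : Hyp) : Hyp :=
  hmul (F z) (hconj (G z)) - hmul (hconj (F z)) (G z)

/-- Characteristic coefficient `a_(F,G) = -(F̄ G_z̄ - F_z̄ Ḡ)/(F Ḡ - F̄ G)`. -/
def aFG (F G : Hyp → Hyp) (z : Hyp) : Hyp :=
  - hdiv (hmul (hconj (F z)) (dzbar G z) - hmul (dzbar F z) (hconj (G z))) (pairDenom F G z)

/-- Characteristic coefficient `b_(F,G) = (F G_z̄ - F_z̄ G)/(F Ḡ - F̄ G)`. -/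
def bFG (F G : Hyp → Hyp) (z : Hyp) : Hyp :=
  hdiv (hmul (F z) (dzbar G z) - hmul (dzbar F z) (G z)) (pairDenom F G z)

/-- Characteristic coefficient `A_(F,G) = -(F̄ G_z - F_z Ḡ)/(F Ḡ - F̄ G)`. -/
def AFG (F G : Hyp → Hyp) (z : Hyp) : Hyp :=
  - hdiv (hmul (hconj (F z)) (dz G z) - hmul (dz F z) (hconj (G z))) (pairDenom F G z)

/-- Characteristic coefficient `B_(F,G) = (F G_z - F_z G)/(F Ḡ - F̄ G)`. -/
def BFG (F G : Hyp → Hyp) (z : Hyp) : Hyp :=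
  hdiv (hmul (F z) (dz G z) - hmul (dz F z) (G z)) (pairDenom F G z)

/-- A generating pair on `Ω`: twice continuously differentiable `F, G` with `Im(F̄G) ≠ 0`. -/
def IsGenPair (F G : Hyp → Hyp) (Ω : Set Hyp) : Prop :=
  ContDiffOn ℝ 2 F Ω ∧ ContDiffOn ℝ 2 G Ω ∧ ∀ z ∈ Ω, him (hmul (hconj (F z)) (G z)) ≠ 0

/-- The idempotent `e₁ = (1+j)/2`. -/
def e1 : Hyp := (1/2, 1/2)

/-- The idempotent `e₂ = (1-j)/2`. -/
def e2 : Hyp := (1/2, -1/2)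

/-- Contour integral `∮_{∂R} h dz` over the counterclockwise boundary of the rectangle
`[x₁,x₂] × [t₁,t₂]`, with hyperbolic multiplication (`dz = dx` on horizontal sides,
`dz = j dt` on vertical sides). -/
def rectContourInt (h : Hyp → Hyp) (x₁ x₂ t₁ t₂ : ℝ) : Hyp :=
  ((∫ x in x₁..x₂, h (x, t₁)) - ∫ x in x₁..x₂, h (x, t₂)) +
    hmul hj ((∫ t in t₁..t₂, h (x₂, t)) - ∫ t in t₁..t₂, h (x₁, t))

/-- Integral `∫_{[z₀,z]} h dζ` along the straight segment from `z₀` to `z`,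
with hyperbolic multiplication. -/
def segInt (h : Hyp → Hyp) (z₀ z : Hyp) : Hyp :=
  ∫ s in (0:ℝ)..1, hmul (h (z₀ + s • (z - z₀))) (z - z₀)

/-- Natural powers in 𝔻. -/
def hpow (a : Hyp) : ℕ → Hyp
  | 0 => (1, 0)
  | n + 1 => hmul a (hpow a n)

/-- Integer powers in 𝔻 (for invertible base). -/
def hzpow (a : Hyp) : ℤ → Hyp
  | Int.ofNat n => hpow a n
  | Int.negSucc n => hinv (hpow a (n + 1))


private lemma hyp_hasDerivAt_x {g : Hyp → ℝ} {p : Hyp} (hg : DifferentiableAt ℝ g p) :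
    HasDerivAt (fun s => g (s, p.2)) (fderiv ℝ g p (1, 0)) p.1 := by
  have hline : HasDerivAt (fun s : ℝ => ((s, p.2) : Hyp)) ((1 : ℝ), (0 : ℝ)) p.1 :=
    (hasDerivAt_id p.1).prodMk (hasDerivAt_const p.1 p.2)
  have hgp : HasFDerivAt g (fderiv ℝ g p) (p.1, p.2) := by
    rw [Prod.mk.eta]; exact hg.hasFDerivAt
  exact hgp.comp_hasDerivAt p.1 hline

private lemma hyp_hasDerivAt_t {g : Hyp → ℝ} {p : Hyp} (hg : DifferentiableAt ℝ g p) :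
    HasDerivAt (fun s => g (p.1, s)) (fderiv ℝ g p (0, 1)) p.2 := by
  have hline : HasDerivAt (fun s : ℝ => ((p.1, s) : Hyp)) ((0 : ℝ), (1 : ℝ)) p.2 :=
    (hasDerivAt_const p.2 p.1).prodMk (hasDerivAt_id p.2)
  have hgp : HasFDerivAt g (fderiv ℝ g p) (p.1, p.2) := by
    rw [Prod.mk.eta]; exact hg.hasFDerivAt
  exact hgp.comp_hasDerivAt p.2 hline

private lemma diff_apply_fderiv {g : Hyp → ℝ} {p : Hyp} (hg : ContDiffAt ℝ 2 g p) (v : Hyp) :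
    DifferentiableAt ℝ (fun q => fderiv ℝ g q v) p := by
  have h1 : ContDiffAt ℝ 1 (fderiv ℝ g) p := hg.fderiv_right (by norm_num)
  exact (ContinuousLinearMap.apply ℝ ℝ v).differentiable.differentiableAt.comp p
    (h1.differentiableAt one_ne_zero)

private lemma fderiv_apply_fderiv {g : Hyp → ℝ} {p : Hyp} (hg : ContDiffAt ℝ 2 g p) (v w : Hyp) :
    fderiv ℝ (fun q => fderiv ℝ g q v) p w = fderiv ℝ (fderiv ℝ g) p w v := by
  have h1 : ContDiffAt ℝ 1 (fderiv ℝ g) p := hg.fderiv_right (by norm_num)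
  have h2 : HasFDerivAt (fun q => fderiv ℝ g q v)
      ((ContinuousLinearMap.apply ℝ ℝ v).comp (fderiv ℝ (fderiv ℝ g) p)) p :=
    (ContinuousLinearMap.apply ℝ ℝ v).hasFDerivAt.comp p (h1.differentiableAt one_ne_zero).hasFDerivAt
  rw [h2.fderiv]; rfl

private lemma mixed_symm {g : Hyp → ℝ} {p : Hyp} (hg : ContDiffAt ℝ 2 g p) :
    fderiv ℝ (fun q => fderiv ℝ g q (1, 0)) p (0, 1)
      = fderiv ℝ (fun q => fderiv ℝ g q (0, 1)) p (1, 0) := by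
  rw [fderiv_apply_fderiv hg, fderiv_apply_fderiv hg]
  exact (hg.isSymmSndFDerivAt (by norm_num)) (0, 1) (1, 0)

section KGAux

private lemma pdx_eq_fderiv {g : Hyp → ℝ} {p : Hyp} (hg : DifferentiableAt ℝ g p) :
    pdx g p = fderiv ℝ g p (1, 0) := (hyp_hasDerivAt_x hg).deriv

private lemma pdt_eq_fderiv {g : Hyp → ℝ} {p : Hyp} (hg : DifferentiableAt ℝ g p) :
    pdt g p = fderiv ℝ g p (0, 1) := (hyp_hasDerivAt_t hg).deriv

private lemma tendsto_line_x (p : Hyp) :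
    Filter.Tendsto (fun s : ℝ => ((s, p.2) : Hyp)) (nhds p.1) (nhds p) := by
  have := (continuous_id.prodMk continuous_const :
    Continuous fun s : ℝ => ((s, p.2) : Hyp)).tendsto p.1
  simpa using this

private lemma tendsto_line_t (p : Hyp) :
    Filter.Tendsto (fun s : ℝ => ((p.1, s) : Hyp)) (nhds p.2) (nhds p) := by
  have := (continuous_const.prodMk continuous_id :
    Continuous fun s : ℝ => ((p.1, s) : Hyp)).tendsto p.2
  simpa using this

private lemma pdx_congr {g₁ g₂ : Hyp → ℝ} {p : Hyp} (h : g₁ =ᶠ[nhds p] g₂) :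
    pdx g₁ p = pdx g₂ p :=
  Filter.EventuallyEq.deriv_eq ((tendsto_line_x p).eventually h)

private lemma pdt_congr {g₁ g₂ : Hyp → ℝ} {p : Hyp} (h : g₁ =ᶠ[nhds p] g₂) :
    pdt g₁ p = pdt g₂ p :=
  Filter.EventuallyEq.deriv_eq ((tendsto_line_t p).eventually h)

private lemma ev_pdx {Ω : Set Hyp} (hΩ : IsOpen Ω) {g : Hyp → ℝ} (hg : ContDiffOn ℝ 2 g Ω)
    {p : Hyp} (hp : p ∈ Ω) : pdx g =ᶠ[nhds p] fun q => fderiv ℝ g q (1, 0) := by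
  filter_upwards [hΩ.mem_nhds hp] with q hq
  exact pdx_eq_fderiv ((hg.contDiffAt (hΩ.mem_nhds hq)).differentiableAt (by norm_num))

private lemma ev_pdt {Ω : Set Hyp} (hΩ : IsOpen Ω) {g : Hyp → ℝ} (hg : ContDiffOn ℝ 2 g Ω)
    {p : Hyp} (hp : p ∈ Ω) : pdt g =ᶠ[nhds p] fun q => fderiv ℝ g q (0, 1) := by
  filter_upwards [hΩ.mem_nhds hp] with q hq
  exact pdt_eq_fderiv ((hg.contDiffAt (hΩ.mem_nhds hq)).differentiableAt (by norm_num))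

end KGAux

set_option maxHeartbeats 2000000 in
/-- factorization of the Klein-Gordon operator. If `f > 0` is a C² solution of
`□f = νf` on an open `Ω`, then for every real-valued `φ ∈ C²(Ω)`,
`¼(□φ − νφ) = (∂_z̄ + (f_z/f)C)(∂_z − (f_z/f)C)φ = (∂_z + (f_z̄/f)C)(∂_z̄ − (f_z̄/f)C)φ`. -/
theorem kleinGordon_factorization (Ω : Set Hyp) (hΩ : IsOpen Ω) (ν f : Hyp → ℝ)
    (hf : ContDiffOn ℝ 2 f Ω) (hfpos : ∀ p ∈ Ω, 0 < f p)
    (hKG : ∀ p ∈ Ω, waveOp f p = ν p * f p)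
    (φ : Hyp → ℝ) (hφ : ContDiffOn ℝ 2 φ Ω) :
    ∀ p ∈ Ω,
      ((((waveOp φ p - ν p * φ p) / 4, 0) : Hyp) =
        dzbar (fun q => rz φ q - hmul (hdiv (rz f q) (f q, 0)) ((φ q, 0) : Hyp)) p +
          hmul (hdiv (rz f p) (f p, 0))
            (hconj (rz φ p - hmul (hdiv (rz f p) (f p, 0)) ((φ p, 0) : Hyp)))) ∧
      ((((waveOp φ p - ν p * φ p) / 4, 0) : Hyp) =
        dz (fun q => rzbar φ q - hmul (hdiv (rzbar f q) (f q, 0)) ((φ q, 0) : Hyp)) p +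
          hmul (hdiv (rzbar f p) (f p, 0))
            (hconj (rzbar φ p - hmul (hdiv (rzbar f p) (f p, 0)) ((φ p, 0) : Hyp)))) := by
  intro p hp
  have hmem := hΩ.mem_nhds hp
  have hf2 : ContDiffAt ℝ 2 f p := hf.contDiffAt hmem
  have hφ2 : ContDiffAt ℝ 2 φ p := hφ.contDiffAt hmem
  have hfd : DifferentiableAt ℝ f p := hf2.differentiableAt (by norm_num)
  have hφd : DifferentiableAt ℝ φ p := hφ2.differentiableAt (by norm_num)
  have hfp : f p ≠ 0 := (hfpos p hp).ne'
  have hdiffq : ∀ q ∈ Ω, DifferentiableAt ℝ f q ∧ DifferentiableAt ℝ φ q ∧ f q ≠ 0 :=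
    fun q hq => ⟨(hf.contDiffAt (hΩ.mem_nhds hq)).differentiableAt (by norm_num),
      (hφ.contDiffAt (hΩ.mem_nhds hq)).differentiableAt (by norm_num), (hfpos q hq).ne'⟩
  -- eventual equalities for the components of the two bracketed functions
  have hwu : (fun q => (rz φ q - hmul (hdiv (rz f q) (f q, 0)) ((φ q, 0) : Hyp)).1)
      =ᶠ[nhds p] fun q => fderiv ℝ φ q (1, 0) / 2 - fderiv ℝ f q (1, 0) * φ q / (2 * f q) := by
    filter_upwards [hmem] with q hq
    obtain ⟨h1, h2, h3⟩ := hdiffq q hq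
    simp only [rz, hmul, hdiv, hinv, Prod.fst_sub]
    rw [pdx_eq_fderiv h2, pdx_eq_fderiv h1]
    field_simp
    ring
  have hwv : (fun q => (rz φ q - hmul (hdiv (rz f q) (f q, 0)) ((φ q, 0) : Hyp)).2)
      =ᶠ[nhds p] fun q => fderiv ℝ φ q (0, 1) / 2 - fderiv ℝ f q (0, 1) * φ q / (2 * f q) := by
    filter_upwards [hmem] with q hq
    obtain ⟨h1, h2, h3⟩ := hdiffq q hq
    simp only [rz, hmul, hdiv, hinv, Prod.snd_sub]
    rw [pdt_eq_fderiv h2, pdt_eq_fderiv h1]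
    field_simp
    ring
  have hw2u : (fun q => (rzbar φ q - hmul (hdiv (rzbar f q) (f q, 0)) ((φ q, 0) : Hyp)).1)
      =ᶠ[nhds p] fun q => fderiv ℝ φ q (1, 0) / 2 - fderiv ℝ f q (1, 0) * φ q / (2 * f q) := by
    filter_upwards [hmem] with q hq
    obtain ⟨h1, h2, h3⟩ := hdiffq q hq
    simp only [rzbar, hmul, hdiv, hinv, Prod.fst_sub]
    rw [pdx_eq_fderiv h2, pdx_eq_fderiv h1]
    field_simp
    ring
  have hw2v : (fun q => (rzbar φ q - hmul (hdiv (rzbar f q) (f q, 0)) ((φ q, 0) : Hyp)).2)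
      =ᶠ[nhds p] fun q =>
        -(fderiv ℝ φ q (0, 1) / 2 - fderiv ℝ f q (0, 1) * φ q / (2 * f q)) := by
    filter_upwards [hmem] with q hq
    obtain ⟨h1, h2, h3⟩ := hdiffq q hq
    simp only [rzbar, hmul, hdiv, hinv, Prod.snd_sub]
    rw [pdt_eq_fderiv h2, pdt_eq_fderiv h1]
    field_simp
    ring
  -- HasDerivAt facts
  have h2fx : (2 : ℝ) * f (p.1, p.2) ≠ 0 := by
    rw [Prod.mk.eta]; exact mul_ne_zero two_ne_zero hfp
  have hUx := ((hyp_hasDerivAt_x (diff_apply_fderiv hφ2 (1, 0))).div_const 2).sub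
    (((hyp_hasDerivAt_x (diff_apply_fderiv hf2 (1, 0))).mul (hyp_hasDerivAt_x hφd)).div
      ((hyp_hasDerivAt_x hfd).const_mul 2) h2fx)
  have hUt := ((hyp_hasDerivAt_t (diff_apply_fderiv hφ2 (1, 0))).div_const 2).sub
    (((hyp_hasDerivAt_t (diff_apply_fderiv hf2 (1, 0))).mul (hyp_hasDerivAt_t hφd)).div
      ((hyp_hasDerivAt_t hfd).const_mul 2) h2fx)
  have hVx := ((hyp_hasDerivAt_x (diff_apply_fderiv hφ2 (0, 1))).div_const 2).sub
    (((hyp_hasDerivAt_x (diff_apply_fderiv hf2 (0, 1))).mul (hyp_hasDerivAt_x hφd)).div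
      ((hyp_hasDerivAt_x hfd).const_mul 2) h2fx)
  have hVt := ((hyp_hasDerivAt_t (diff_apply_fderiv hφ2 (0, 1))).div_const 2).sub
    (((hyp_hasDerivAt_t (diff_apply_fderiv hf2 (0, 1))).mul (hyp_hasDerivAt_t hφd)).div
      ((hyp_hasDerivAt_t hfd).const_mul 2) h2fx)
  have e1 := (pdx_congr hwu).trans hUx.deriv
  have e2 := (pdt_congr hwv).trans hVt.deriv
  have e3 := (pdx_congr hwv).trans hVx.deriv
  have e4 := (pdt_congr hwu).trans hUt.deriv
  have e1' := (pdx_congr hw2u).trans hUx.deriv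
  have e2' := (pdt_congr hw2v).trans hVt.neg.deriv
  have e3' := (pdx_congr hw2v).trans hVx.neg.deriv
  have e4' := (pdt_congr hw2u).trans hUt.deriv
  -- first order partials at p
  have px1 : pdx φ p = fderiv ℝ φ p (1, 0) := pdx_eq_fderiv hφd
  have pt1 : pdt φ p = fderiv ℝ φ p (0, 1) := pdt_eq_fderiv hφd
  have px2 : pdx f p = fderiv ℝ f p (1, 0) := pdx_eq_fderiv hfd
  have pt2 : pdt f p = fderiv ℝ f p (0, 1) := pdt_eq_fderiv hfd
  -- wave operator values
  have hwaveφ : waveOp φ p = fderiv ℝ (fun q => fderiv ℝ φ q (1, 0)) p (1, 0)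
      - fderiv ℝ (fun q => fderiv ℝ φ q (0, 1)) p (0, 1) := by
    unfold waveOp
    rw [pdx_congr (ev_pdx hΩ hφ hp), pdt_congr (ev_pdt hΩ hφ hp),
      pdx_eq_fderiv (diff_apply_fderiv hφ2 (1, 0)), pdt_eq_fderiv (diff_apply_fderiv hφ2 (0, 1))]
  have hKG' : fderiv ℝ (fun q => fderiv ℝ f q (1, 0)) p (1, 0)
      - fderiv ℝ (fun q => fderiv ℝ f q (0, 1)) p (0, 1) = ν p * f p := by
    rw [← hKG p hp]
    unfold waveOp
    rw [pdx_congr (ev_pdx hΩ hf hp), pdt_congr (ev_pdt hΩ hf hp),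
      pdx_eq_fderiv (diff_apply_fderiv hf2 (1, 0)), pdt_eq_fderiv (diff_apply_fderiv hf2 (0, 1))]
  have hνφ : ν p * φ p = (fderiv ℝ (fun q => fderiv ℝ f q (1, 0)) p (1, 0)
      - fderiv ℝ (fun q => fderiv ℝ f q (0, 1)) p (0, 1)) * φ p / f p := by
    rw [hKG']; field_simp
  have hsymφ : fderiv ℝ (fun q => fderiv ℝ φ q (1, 0)) p (0, 1)
      = fderiv ℝ (fun q => fderiv ℝ φ q (0, 1)) p (1, 0) := mixed_symm hφ2
  have hsymf : fderiv ℝ (fun q => fderiv ℝ f q (1, 0)) p (0, 1)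
      = fderiv ℝ (fun q => fderiv ℝ f q (0, 1)) p (1, 0) := mixed_symm hf2
  constructor
  · simp only [dzbar]
    rw [e1, e2, e3, e4, hwaveφ, hνφ]
    simp only [rz, hmul, hdiv, hinv, hconj, Prod.mk.injEq, Prod.mk_add_mk, Prod.mk_sub_mk,
      Prod.mk.eta, Pi.mul_apply]
    rw [px1, pt1, px2, pt2, hsymφ, hsymf]
    set a1 := fderiv ℝ φ p (1, 0) with ha1
    set a2 := fderiv ℝ φ p (0, 1) with ha2
    set b1 := fderiv ℝ f p (1, 0) with hb1
    set b2 := fderiv ℝ f p (0, 1) with hb2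
    set c1 := fderiv ℝ (fun q => fderiv ℝ φ q (1, 0)) p (1, 0) with hc1
    set c2 := fderiv ℝ (fun q => fderiv ℝ φ q (0, 1)) p (1, 0) with hc2
    set c3 := fderiv ℝ (fun q => fderiv ℝ φ q (0, 1)) p (0, 1) with hc3
    set d1 := fderiv ℝ (fun q => fderiv ℝ f q (1, 0)) p (1, 0) with hd1
    set d2 := fderiv ℝ (fun q => fderiv ℝ f q (0, 1)) p (1, 0) with hd2
    set d3 := fderiv ℝ (fun q => fderiv ℝ f q (0, 1)) p (0, 1) with hd3
    constructor
    · field_simp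
      ring
    · field_simp
      ring
  · simp only [dz]
    rw [e1', e2', e3', e4', hwaveφ, hνφ]
    simp only [rzbar, hmul, hdiv, hinv, hconj, Prod.mk.injEq, Prod.mk_add_mk, Prod.mk_sub_mk,
      Prod.mk.eta, Pi.mul_apply]
    rw [px1, pt1, px2, pt2, hsymφ, hsymf]
    set a1 := fderiv ℝ φ p (1, 0) with ha1
    set a2 := fderiv ℝ φ p (0, 1) with ha2
    set b1 := fderiv ℝ f p (1, 0) with hb1
    set b2 := fderiv ℝ f p (0, 1) with hb2
    set c1 := fderiv ℝ (fun q => fderiv ℝ φ q (1, 0)) p (1, 0) with hc1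
    set c2 := fderiv ℝ (fun q => fderiv ℝ φ q (0, 1)) p (1, 0) with hc2
    set c3 := fderiv ℝ (fun q => fderiv ℝ φ q (0, 1)) p (0, 1) with hc3
    set d1 := fderiv ℝ (fun q => fderiv ℝ f q (1, 0)) p (1, 0) with hd1
    set d2 := fderiv ℝ (fun q => fderiv ℝ f q (0, 1)) p (1, 0) with hd2
    set d3 := fderiv ℝ (fun q => fderiv ℝ f q (0, 1)) p (0, 1) with hd3
    constructor
    · field_simp
      ring
    · field_simp
      ring
end
end

section
/- Let Ω ⊆ ℝ² be open, let f : Ω → ℝ be positive and continuously differentiable, and let w = u + jv be a continuously differentiable 𝔻-valued function on Ω satisfying the Vekua equation w_z̄ = −(f_z/f)·w̄ on Ω (equivalently, u_x − v_t = −(f_x/f)u + (f_t/f)v and v_x − u_t = (f_t/f)u − (f_x/f)v). Then the function Φ = w/f, with components Φ₁ = u/f and Φ₂ = v/f, satisfies the compatibility condition ∂_t Φ₁ − ∂_x Φ₂ = 0 on Ω. -/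
noncomputable section

open Filter Topology MeasureTheory

/-- Slice derivative in x for a differentiable real-valued function. -/
lemma sliceX {g : Hyp → ℝ} {p : Hyp} (h : DifferentiableAt ℝ g p) :
    HasDerivAt (fun s => g (s, p.2)) (pdx g p) p.1 := by
  have hinner : DifferentiableAt ℝ (fun s : ℝ => ((s, p.2) : Hyp)) p.1 :=
    differentiableAt_id.prodMk (differentiableAt_const _)
  have : DifferentiableAt ℝ (fun s : ℝ => g (s, p.2)) p.1 := by
    exact DifferentiableAt.comp p.1 (by simpa using h) hinner
  simpa [pdx] using this.hasDerivAt

lemma sliceT {g : Hyp → ℝ} {p : Hyp} (h : DifferentiableAt ℝ g p) :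
    HasDerivAt (fun s => g (p.1, s)) (pdt g p) p.2 := by
  have hinner : DifferentiableAt ℝ (fun s : ℝ => ((p.1, s) : Hyp)) p.2 :=
    (differentiableAt_const _).prodMk differentiableAt_id
  have : DifferentiableAt ℝ (fun s : ℝ => g (p.1, s)) p.2 := by
    exact DifferentiableAt.comp p.2 (by simpa using h) hinner
  simpa [pdt] using this.hasDerivAt

/-- if `f > 0` is C¹ and `w = u + jv ∈ C¹(Ω)` solves `w_z̄ = −(f_z/f)w̄`,
then `Φ = w/f` with components `Φ₁ = u/f`, `Φ₂ = v/f` satisfies `∂_tΦ₁ − ∂_xΦ₂ = 0` on `Ω`. -/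
theorem vekua_compatibility_condition (Ω : Set Hyp) (hΩ : IsOpen Ω)
    (f : Hyp → ℝ) (hf : ContDiffOn ℝ 1 f Ω) (hfpos : ∀ p ∈ Ω, 0 < f p)
    (w : Hyp → Hyp) (hw : ContDiffOn ℝ 1 w Ω)
    (hVekua : ∀ p ∈ Ω, dzbar w p = - hmul (hdiv (rz f p) (f p, 0)) (hconj (w p))) :
    ∀ p ∈ Ω,
      pdt (fun q => (w q).1 / f q) p - pdx (fun q => (w q).2 / f q) p = 0 := by
  intro p hp
  have hfd : DifferentiableAt ℝ f p :=
    (hf.contDiffAt (hΩ.mem_nhds hp)).differentiableAt one_ne_zero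
  have hwd : DifferentiableAt ℝ w p :=
    (hw.contDiffAt (hΩ.mem_nhds hp)).differentiableAt one_ne_zero
  have hud : DifferentiableAt ℝ (fun q => (w q).1) p := hwd.fst
  have hvd : DifferentiableAt ℝ (fun q => (w q).2) p := hwd.snd
  have hfne : f p ≠ 0 := (hfpos p hp).ne'
  have h1 : HasDerivAt (fun s => (w (p.1, s)).1 / f (p.1, s))
      ((pdt (fun q => (w q).1) p * f p - (w p).1 * pdt f p) / f p ^ 2) p.2 := by
    exact (sliceT hud).div (sliceT hfd) hfne
  have h2 : HasDerivAt (fun s => (w (s, p.2)).2 / f (s, p.2))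
      ((pdx (fun q => (w q).2) p * f p - (w p).2 * pdx f p) / f p ^ 2) p.1 := by
    exact (sliceX hvd).div (sliceX hfd) hfne
  have e1 : pdt (fun q => (w q).1 / f q) p
      = (pdt (fun q => (w q).1) p * f p - (w p).1 * pdt f p) / f p ^ 2 := h1.deriv
  have e2 : pdx (fun q => (w q).2 / f q) p
      = (pdx (fun q => (w q).2) p * f p - (w p).2 * pdx f p) / f p ^ 2 := h2.deriv
  have hV := hVekua p hp
  have hV2 := congrArg Prod.snd hV
  simp only [dzbar, hmul, hdiv, hinv, rz, hconj, Prod.neg_mk] at hV2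
  rw [e1, e2]
  field_simp at hV2 ⊢
  have key : pdx (fun q => (w q).2) p * f p - pdt (fun q => (w q).1) p * f p = -(pdt f p * (w p).1) + pdx f p * (w p).2 := by
    have h4 : (4 : ℝ) * f p ^ 3 ≠ 0 := by positivity
    apply mul_left_cancel₀ h4
    ring_nf
    ring_nf at hV2
    linear_combination (4 * f p ^ 2) * hV2
  ring_nf
  ring_nf at key
  linarith [key]
end
end
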